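/- Let (V, ω) be a finite-dimensional real symplectic vector space and let W ⊆ V be a coisotropic subspace, i.e. W^ω ⊆ W. Equip V × W with the alternating bilinear form Ω((u₁, w₁), (u₂, w₂)) = ω(u₁, u₂) − ω(w₁, w₂), and let Δ_W = {(w, w) : w ∈ W} be the diagonal. Then there exists a linear subspace S ⊆ V × W with Δ_W ⊆ S such that the restriction of Ω to S is nondegenerate, dim S = 2 · dim W, and Δ_W is a Lagrangian subspace of (S, Ω|_S), i.e. Δ_W equals its Ω-orthogonal complement computed inside S. -/
import Mathlib


open Module

/-- The symplectic orthogonal `W^ω = {v ∈ V : ω(v, w) = 0 for all w ∈ W}` of a subspace `W`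
with respect to a bilinear form `ω`. -/
def sympOrth {V : Type*} [AddCommGroup V] [Module ℝ V]
    (ω : V →ₗ[ℝ] V →ₗ[ℝ] ℝ) (W : Submodule ℝ V) : Submodule ℝ V where
  carrier := {v | ∀ w ∈ W, ω v w = 0}
  add_mem' := by
    intro a b ha hb w hw
    simp [map_add, ha w hw, hb w hw]
  zero_mem' := by
    intro w hw
    simp
  smul_mem' := by
    intro c a ha w hw
    simp [map_smul, ha w hw]

/-- The bilinear form `Ω((u₁, w₁), (u₂, w₂)) = ω(u₁, u₂) − ω(w₁, w₂)` on the product `V × W`. -/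
def prodForm {V : Type*} [AddCommGroup V] [Module ℝ V]
    (ω : V →ₗ[ℝ] V →ₗ[ℝ] ℝ) (W : Submodule ℝ V) :
    (V × W) →ₗ[ℝ] (V × W) →ₗ[ℝ] ℝ :=
  LinearMap.mk₂ ℝ (fun p q => ω p.1 q.1 - ω (p.2 : V) (q.2 : V))
    (by intro p p' q; simp [map_add]; ring)
    (by intro c p q; simp [map_smul]; ring)
    (by intro p q q'; simp [map_add]; ring)
    (by intro c p q; simp [map_smul]; ring)

/-- The diagonal `Δ_W = {(w, w) : w ∈ W}` as a subspace of `V × W`. -/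
def diagSub {V : Type*} [AddCommGroup V] [Module ℝ V] (W : Submodule ℝ V) :
    Submodule ℝ (V × W) where
  carrier := {p | p.1 = (p.2 : V)}
  add_mem' := by
    intro a b ha hb
    simp only [Set.mem_setOf_eq] at *
    simp [Prod.fst_add, Prod.snd_add, ha, hb]
  zero_mem' := by simp
  smul_mem' := by
    intro c a ha
    simp only [Set.mem_setOf_eq] at *
    simp [Prod.smul_fst, Prod.smul_snd, ha]

/-- Skew-symmetry of an alternating form. -/
lemma omega_skew {V : Type*} [AddCommGroup V] [Module ℝ V]
    (ω : V →ₗ[ℝ] V →ₗ[ℝ] ℝ) (halt : ∀ v, ω v v = 0) (u v : V) :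
    ω u v = - ω v u := by
  have h := halt (u + v)
  simp [map_add, halt u, halt v] at h
  linarith

/-- Rank–nullity for the symplectic orthogonal. -/
lemma sympOrth_finrank {V : Type*} [AddCommGroup V] [Module ℝ V] [FiniteDimensional ℝ V]
    (ω : V →ₗ[ℝ] V →ₗ[ℝ] ℝ)
    (hnd : ∀ v, (∀ u, ω v u = 0) → v = 0)
    (U : Submodule ℝ V) :
    finrank ℝ (sympOrth ω U) + finrank ℝ U = finrank ℝ V := by
  classical
  let ψ : V →ₗ[ℝ] Module.Dual ℝ U := (U.subtype.dualMap).comp ω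
  have hker : LinearMap.ker ψ = sympOrth ω U := by
    ext v
    constructor
    · intro hv w hw
      have : ψ v = 0 := hv
      have := congrArg (fun f => f ⟨w, hw⟩) this
      simpa [ψ, LinearMap.dualMap_apply] using this
    · intro hv
      have : ψ v = 0 := by
        ext u
        simpa [ψ, LinearMap.dualMap_apply] using hv u u.2
      exact this
  have hinj : Function.Injective (ω : V →ₗ[ℝ] Module.Dual ℝ V) := by
    rw [injective_iff_map_eq_zero]
    intro v hv
    exact hnd v fun u => by simpa using congrArg (fun f => f u) hv
  have hsurjω : Function.Surjective (ω : V →ₗ[ℝ] Module.Dual ℝ V) := by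
    have h := (LinearMap.injective_iff_surjective_of_finrank_eq_finrank
      (f := (ω : V →ₗ[ℝ] Module.Dual ℝ V)) (Subspace.dual_finrank_eq (V := V)).symm)
    exact h.mp hinj
  have hsurj : Function.Surjective ψ :=
    (LinearMap.dualMap_surjective_of_injective U.injective_subtype).comp hsurjω
  have hrange : LinearMap.range ψ = ⊤ := LinearMap.range_eq_top.mpr hsurj
  have h := LinearMap.finrank_range_add_finrank_ker ψ
  rw [hrange, hker] at h
  have hd : finrank ℝ (⊤ : Submodule ℝ (Module.Dual ℝ U)) = finrank ℝ U := by
    rw [finrank_top, Subspace.dual_finrank_eq]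
  omega

/-- Let `(V, ω)` be a finite-dimensional real symplectic vector space and
`W ⊆ V` a coisotropic subspace (`W^ω ⊆ W`). Equip `V × W` with the form
`Ω((u₁, w₁), (u₂, w₂)) = ω(u₁, u₂) − ω(w₁, w₂)` and let `Δ_W` be the diagonal.
Then there is a subspace `S ⊆ V × W` containing `Δ_W` such that `Ω|_S` is nondegenerate,
`dim S = 2 · dim W`, and `Δ_W` is Lagrangian in `(S, Ω|_S)`: it equals its `Ω`-orthogonal
complement computed inside `S`. -/
theorem exists_symplectic_subspace_with_lagrangian_diagonal
    {V : Type*} [AddCommGroup V] [Module ℝ V] [FiniteDimensional ℝ V]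
    (ω : V →ₗ[ℝ] V →ₗ[ℝ] ℝ)
    (halt : ∀ v, ω v v = 0)
    (hnd : ∀ v, (∀ u, ω v u = 0) → v = 0)
    (W : Submodule ℝ V)
    (hco : sympOrth ω W ≤ W) :
    ∃ S : Submodule ℝ (V × W),
      diagSub W ≤ S ∧
      (∀ p ∈ S, (∀ q ∈ S, prodForm ω W p q = 0) → p = 0) ∧
      finrank ℝ S = 2 * finrank ℝ W ∧
      (diagSub W : Set (V × W)) =
        {p : V × W | p ∈ S ∧ ∀ q ∈ diagSub W, prodForm ω W p q = 0} := by
  classical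
  set K := sympOrth ω W with hKdef
  obtain ⟨X, hX⟩ := K.exists_isCompl
  -- the linear map p ↦ p.1 - p.2
  let f : (V × W) →ₗ[ℝ] V :=
    (LinearMap.fst ℝ V W) - (W.subtype.comp (LinearMap.snd ℝ V W))
  have hf : ∀ p : V × W, f p = p.1 - (p.2 : V) := fun p => rfl
  refine ⟨Submodule.comap f X, ?_, ?_, ?_, ?_⟩
  -- membership characterizations
  all_goals
    have hmemS : ∀ p : V × W, p ∈ Submodule.comap f X ↔ p.1 - (p.2 : V) ∈ X :=
      fun p => Iff.rfl
    have hmemD : ∀ p : V × W, p ∈ diagSub W ↔ p.1 = (p.2 : V) := fun p => Iff.rfl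
    have hform : ∀ p q : V × W,
        prodForm ω W p q = ω p.1 q.1 - ω (p.2 : V) (q.2 : V) := fun p q => rfl
    have hDS : diagSub W ≤ Submodule.comap f X := by
      intro p hp
      rw [hmemS, (hmemD p).mp hp, sub_self]
      exact X.zero_mem
    -- key: if p ∈ S is orthogonal to the diagonal, then p is diagonal
    have hkey : ∀ p ∈ Submodule.comap f X,
        (∀ q ∈ diagSub W, prodForm ω W p q = 0) → p.1 = (p.2 : V) := by
      intro p hp hperp
      have hu : p.1 - (p.2 : V) ∈ K := by
        intro w hw
        have hq : ((w : V), (⟨w, hw⟩ : W)) ∈ diagSub W := rfl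
        have := hperp _ hq
        rw [hform] at this
        simp only [map_sub, LinearMap.sub_apply]
        simpa using this
      have : p.1 - (p.2 : V) ∈ X ⊓ K := ⟨(hmemS p).mp hp, hu⟩
      rw [inf_comm, hX.inf_eq_bot] at this
      exact sub_eq_zero.mp ((Submodule.mem_bot ℝ).mp this)
  · exact hDS
  · -- nondegeneracy
    intro p hp hall
    have hdiag : p.1 = (p.2 : V) := by
      refine hkey p hp ?_
      intro q hq
      exact hall q (hDS hq)
    -- now ω(p.2, ·) vanishes on X and on K
    have hXzero : ∀ x ∈ X, ω (p.2 : V) x = 0 := by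
      intro x hx
      have hqS : ((x, 0) : V × W) ∈ Submodule.comap f X := by
        rw [hmemS]; simpa using hx
      have := hall _ hqS
      rw [hform] at this
      simpa [hdiag] using this
    have hKzero : ∀ k ∈ K, ω (p.2 : V) k = 0 := by
      intro k hk
      have := hk (p.2 : V) p.2.2
      rw [omega_skew ω halt]
      simp [this]
    have hzero : (p.2 : V) = 0 := by
      apply hnd
      intro u
      have hu : u ∈ K ⊔ X := by rw [hX.sup_eq_top]; trivial
      obtain ⟨k, hk, x, hx, rfl⟩ := Submodule.mem_sup.mp hu
      rw [map_add, hKzero k hk, hXzero x hx, add_zero]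
    have h2 : p.2 = 0 := Subtype.ext hzero
    have h1 : p.1 = 0 := by rw [hdiag, hzero]
    exact Prod.ext h1 h2
  · -- dimension count
    have hfin : finrank ℝ K + finrank ℝ W = finrank ℝ V := sympOrth_finrank ω hnd W
    have hfin2 : finrank ℝ K + finrank ℝ X = finrank ℝ V :=
      Submodule.finrank_add_eq_of_isCompl hX
    have hXW : finrank ℝ X = finrank ℝ W := by omega
    -- the map (w, x) ↦ (x + w, w) is injective with range S
    let g : (W × X) →ₗ[ℝ] V × W :=
      LinearMap.prod
        ((X.subtype.comp (LinearMap.snd ℝ W X)) + (W.subtype.comp (LinearMap.fst ℝ W X)))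
        (LinearMap.fst ℝ W X)
    have hg : ∀ wx : W × X, g wx = (((wx.2 : V) + (wx.1 : V), wx.1) : V × W) :=
      fun wx => rfl
    have hginj : Function.Injective g := by
      rw [injective_iff_map_eq_zero]
      intro wx hwx
      rw [hg] at hwx
      have h1 : wx.1 = 0 := congrArg Prod.snd hwx
      have h2 : (wx.2 : V) + (wx.1 : V) = 0 := congrArg Prod.fst hwx
      rw [h1] at h2
      simp only [ZeroMemClass.coe_zero, add_zero] at h2
      exact Prod.ext h1 (Subtype.ext h2)
    have hgrange : LinearMap.range g = Submodule.comap f X := by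
      apply le_antisymm
      · rintro p ⟨wx, rfl⟩
        rw [hmemS, hg]
        simpa using wx.2.2
      · intro p hp
        rw [hmemS] at hp
        refine ⟨(p.2, ⟨p.1 - (p.2 : V), hp⟩), ?_⟩
        rw [hg]
        exact Prod.ext (by simp) rfl
    have := LinearMap.finrank_range_of_inj hginj
    rw [hgrange] at this
    rw [this, Module.finrank_prod, hXW]
    ring
  · -- Lagrangian
    ext p
    simp only [SetLike.mem_coe, Set.mem_setOf_eq]
    constructor
    · intro hp
      refine ⟨hDS hp, ?_⟩
      intro q hq
      rw [hform, (hmemD p).mp hp, (hmemD q).mp hq, sub_self]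
    · rintro ⟨hpS, hperp⟩
      exact (hmemD p).mpr (hkey p hpS hperp)
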